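/- Let G be a d-degenerate graph and let G' be obtained from G by adding, for each vertex v, a new vertex v' adjacent to v and to all neighbors of v (a true twin of v). Then G' is (2d+1)-degenerate. -/

import Mathlib

open SimpleGraph

/-- Adjacency of the graph obtained by adding a true twin of every vertex: the twin
`Sum.inr v` of a vertex `v` is adjacent to `v` and to (the originals and twins of) all
neighbors of `v`. -/
def twinAdj {V : Type*} (G : SimpleGraph V) : V ⊕ V → V ⊕ V → Prop
  | Sum.inl u, Sum.inl v => G.Adj u v
  | Sum.inl u, Sum.inr v => u = v ∨ G.Adj u v
  | Sum.inr u, Sum.inl v => u = v ∨ G.Adj u v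
  | Sum.inr u, Sum.inr v => G.Adj u v

/-- The graph obtained from `G` by adding a true twin of every vertex. -/
def twinExt {V : Type*} (G : SimpleGraph V) : SimpleGraph (V ⊕ V) where
  Adj := twinAdj G
  symm := by
    refine ⟨?_⟩
    rintro (u | u) (v | v) h <;> simp only [twinAdj] at h ⊢
    · exact h.symm
    · exact h.imp Eq.symm (fun ha => ha.symm)
    · exact h.imp Eq.symm (fun ha => ha.symm)
    · exact h.symm
  loopless := by
    refine ⟨?_⟩
    rintro (u | u) h <;> simp only [twinAdj] at h <;> exact G.ne_of_adj h rfl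

/-- A graph is `d`-degenerate if every nonempty (induced) subgraph has a vertex of degree
at most `d`. -/
def Degenerate {V : Type*} (G : SimpleGraph V) (d : ℕ) : Prop :=
  ∀ S : Set V, S.Nonempty → ∃ v ∈ S, (S ∩ G.neighborSet v).ncard ≤ d

/-- If `G` is `d`-degenerate, then the graph obtained from `G` by adding a true twin of
every vertex is `(2d + 1)`-degenerate. -/
theorem twinExt_degenerate {V : Type*} (G : SimpleGraph V) (d : ℕ)
    (h : Degenerate G d) : Degenerate (twinExt G) (2 * d + 1) := by
  classical
  intro S hS
  set T : Set V := {v | Sum.inl v ∈ S ∨ Sum.inr v ∈ S} with hT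
  have hTne : T.Nonempty := by
    obtain ⟨x, hx⟩ := hS
    cases x with
    | inl v => exact ⟨v, Or.inl hx⟩
    | inr v => exact ⟨v, Or.inr hx⟩
  obtain ⟨v, hvT, hvd⟩ := h T hTne
  set A : Set V := T ∩ G.neighborSet v with hA
  set f : V → V ⊕ V := fun u => if Sum.inl u ∈ S then Sum.inl u else Sum.inr u with hf
  have hfinj : Function.Injective f := by
    intro a b hab
    simp only [hf] at hab
    split_ifs at hab <;> simp_all
  have hfS : ∀ u ∈ A, f u ∈ S := by
    intro u hu
    rcases hu.1 with h1 | h2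
    · simp [hf, h1]
    · by_cases h1 : Sum.inl u ∈ S <;> simp [hf, h1, h2]
  -- generic bound
  have bound : ∀ (W : Set (V ⊕ V)) (ov : V ⊕ V),
      W ⊆ (Sum.inl '' A ∪ Sum.inr '' A) ∪ {ov} → f '' A ⊆ W →
      W.ncard ≤ 2 * d + 1 := by
    intro W ov hsub hsup
    by_cases hAf : A.Finite
    · have hfin1 : (Sum.inl '' A : Set (V ⊕ V)).Finite := hAf.image _
      have hfin2 : (Sum.inr '' A : Set (V ⊕ V)).Finite := hAf.image _
      calc W.ncard ≤ ((Sum.inl '' A ∪ Sum.inr '' A) ∪ {ov}).ncard :=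
            Set.ncard_le_ncard hsub ((hfin1.union hfin2).union (Set.finite_singleton _))
        _ ≤ (Sum.inl '' A ∪ Sum.inr '' A).ncard + ({ov} : Set (V ⊕ V)).ncard :=
            Set.ncard_union_le _ _
        _ ≤ ((Sum.inl '' A).ncard + (Sum.inr '' A).ncard) + 1 := by
            simp only [Set.ncard_singleton]
            gcongr
            exact Set.ncard_union_le _ _
        _ ≤ (d + d) + 1 := by
            gcongr
            · exact le_trans (Set.ncard_image_le hAf) hvd
            · exact le_trans (Set.ncard_image_le hAf) hvd
        _ = 2 * d + 1 := by ring
    · have hWinf : W.Infinite :=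
        Set.Infinite.mono hsup (Set.Infinite.image hfinj.injOn hAf)
      simp [hWinf.ncard]
  -- the chosen vertex in S: whichever of inl v / inr v is in S
  have hmem : ∀ u ∈ A, f u ∈ S ∩ (twinExt G).neighborSet (Sum.inl v) ∧
      f u ∈ S ∩ (twinExt G).neighborSet (Sum.inr v) := by
    intro u hu
    have hadj : G.Adj v u := hu.2
    constructor <;> refine ⟨hfS u hu, ?_⟩ <;> by_cases h1 : Sum.inl u ∈ S <;>
      simp only [hf, h1, if_true, if_false]
    · exact hadj
    · show v = u ∨ G.Adj v u; exact Or.inr hadj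
    · show v = u ∨ G.Adj v u; exact Or.inr hadj
    · exact hadj
  rcases hvT with hvS | hvS
  · refine ⟨Sum.inl v, hvS, bound _ (Sum.inr v) ?_ ?_⟩
    · rintro (⟨u⟩ | ⟨u⟩) ⟨hxS, hxN⟩
      · have : G.Adj v u := hxN
        exact Or.inl (Or.inl ⟨u, ⟨Or.inl hxS, this⟩, rfl⟩)
      · rcases (hxN : v = u ∨ G.Adj v u) with rfl | hvu
        · exact Or.inr rfl
        · exact Or.inl (Or.inr ⟨u, ⟨Or.inr hxS, hvu⟩, rfl⟩)
    · rintro x ⟨u, hu, rfl⟩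
      exact (hmem u hu).1
  · refine ⟨Sum.inr v, hvS, bound _ (Sum.inl v) ?_ ?_⟩
    · rintro (⟨u⟩ | ⟨u⟩) ⟨hxS, hxN⟩
      · rcases (hxN : v = u ∨ G.Adj v u) with rfl | hvu
        · exact Or.inr rfl
        · exact Or.inl (Or.inl ⟨u, ⟨Or.inl hxS, hvu⟩, rfl⟩)
      · have : G.Adj v u := hxN
        exact Or.inl (Or.inr ⟨u, ⟨Or.inr hxS, this⟩, rfl⟩)
    · rintro x ⟨u, hu, rfl⟩
      exact (hmem u hu).2
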